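/- Let F be a real quadratic field with ring of integers O_F, embedded in ℝ² via the two real embeddings (v_0, v_1). For every x ∈ ℝ² and every 0 < δ < 1, there exist c, d ∈ O_F with c ≠ 0, ‖c·x + d‖ ≤ δ and ‖c‖ ≤ C_F/δ, where ‖(a_0,a_1)‖ = max(|a_0|,|a_1|), c·x = (v_0(c)x_0, v_1(c)x_1), d is embedded as (v_0(d), v_1(d)), and C_F is a constant depending only on F. -/

import Mathlib

open NumberField

set_option maxHeartbeats 1000000 in
/-- Simultaneous Diophantine approximation in a real quadratic field: there is
a constant `C_F`, depending only on `F`, such that for every `x ∈ ℝ²` and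
every `0 < δ < 1` there are `c, d ∈ 𝓞 F` with `c ≠ 0`, `‖c·x + d‖ ≤ δ`
and `‖c‖ ≤ C_F / δ`, the norm being the sup norm via the two real embeddings. -/
theorem real_quadratic_simultaneous_approximation
    (F : Type*) [Field F] [NumberField F]
    (hdeg : Module.finrank ℚ F = 2)
    (v₀ v₁ : F →+* ℝ) (hv : v₀ ≠ v₁) :
    ∃ C_F : ℝ, 0 < C_F ∧
      ∀ x : ℝ × ℝ, ∀ δ : ℝ, 0 < δ → δ < 1 →
        ∃ c d : 𝓞 F, c ≠ 0 ∧
          max |v₀ (c : F) * x.1 + v₀ (d : F)| |v₁ (c : F) * x.2 + v₁ (d : F)| ≤ δ ∧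
          max |v₀ (c : F)| |v₁ (c : F)| ≤ C_F / δ := by
  -- choose an algebraic integer θ with distinct images under the two embeddings
  obtain ⟨z, hz⟩ : ∃ z : F, v₀ z ≠ v₁ z := by
    by_contra h
    push_neg at h
    exact hv (RingHom.ext h)
  have halg : Algebra.IsAlgebraic ℚ F := NumberField.isAlgebraic F
  have hzalg : IsAlgebraic ℤ z :=
    (IsFractionRing.isAlgebraic_iff ℤ ℚ F).mpr (Algebra.IsAlgebraic.isAlgebraic z)
  obtain ⟨w, y, hy0, hyz⟩ : ∃ w : integralClosure ℤ F, ∃ y : ℤ, y ≠ 0 ∧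
      algebraMap ℤ F y * z = w := by
    obtain ⟨y, hy0, hint⟩ := hzalg.exists_integral_multiple
    exact ⟨⟨y • z, hint⟩, y, hy0, by simp [Algebra.smul_def]⟩
  set θ : 𝓞 F := ⟨algebraMap ℤ F y * z, hyz ▸ w.2⟩ with hθdef
  have hθcoe : (θ : F) = (y : F) * z := by
    simp only [hθdef, RingOfIntegers.coe_mk, algebraMap_int_eq, eq_intCast]
    rfl
  have hθ : v₀ (θ : F) ≠ v₁ (θ : F) := by
    rw [hθcoe]
    simp only [map_mul, map_intCast]
    intro h
    have hy0' : ((y : ℤ) : ℝ) ≠ 0 := Int.cast_ne_zero.mpr hy0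
    exact hz (mul_left_cancel₀ hy0' h)
  set V₀ : ℝ := v₀ (θ : F) with hV₀
  set V₁ : ℝ := v₁ (θ : F) with hV₁
  have hD : V₀ - V₁ ≠ 0 := sub_ne_zero.mpr hθ
  set Θ : ℝ := max |V₀| |V₁| with hΘdef
  have hΘ0 : 0 ≤ Θ := le_trans (abs_nonneg V₀) (le_max_left _ _)
  have hV₀Θ : |V₀| ≤ Θ := le_max_left _ _
  have hV₁Θ : |V₁| ≤ Θ := le_max_right _ _
  clear_value V₀ V₁ Θ
  refine ⟨2 * (1 + Θ) ^ 2, by positivity, ?_⟩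
  intro x δ hδ hδ1
  set N : ℕ := ⌈(1 + Θ) / δ⌉₊ with hNdef
  have hNge : (1 + Θ) / δ ≤ (N : ℝ) := Nat.le_ceil _
  have hNpos : 0 < N := Nat.ceil_pos.mpr (by positivity)
  have hNR : (0 : ℝ) < N := by exact_mod_cast hNpos
  -- the points to pigeonhole
  set a : Fin (N + 1) × Fin (N + 1) → ℝ :=
    fun p => ((p.1 : ℕ) + (p.2 : ℕ) * V₀) * x.1 with ha
  set b : Fin (N + 1) × Fin (N + 1) → ℝ :=
    fun p => ((p.1 : ℕ) + (p.2 : ℕ) * V₁) * x.2 with hb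
  set t : Fin (N + 1) × Fin (N + 1) → ℝ :=
    fun p => (a p - b p) / (V₀ - V₁) with ht
  set s : Fin (N + 1) × Fin (N + 1) → ℝ :=
    fun p => a p - t p * V₀ with hs
  have hrec0 : ∀ p, s p + t p * V₀ = a p := fun p => by rw [hs]; ring
  have hrec1 : ∀ p, s p + t p * V₁ = b p := fun p => by
    have h1 : t p * (V₀ - V₁) = a p - b p := div_mul_cancel₀ _ hD
    rw [hs]; linear_combination -h1
  -- pigeonhole
  set f : Fin (N + 1) × Fin (N + 1) → ℤ × ℤ :=
    fun p => (⌊(N : ℝ) * Int.fract (s p)⌋, ⌊(N : ℝ) * Int.fract (t p)⌋) with hf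
  have hmem : ∀ u : ℝ, ⌊(N : ℝ) * Int.fract u⌋ ∈ Finset.Ico (0 : ℤ) (N : ℤ) := by
    intro u
    rw [Finset.mem_Ico]
    constructor
    · refine Int.le_floor.mpr ?_
      push_cast
      exact mul_nonneg hNR.le (Int.fract_nonneg u)
    · exact Int.floor_lt.mpr (by
        push_cast
        calc (N : ℝ) * Int.fract u < (N : ℝ) * 1 :=
          (mul_lt_mul_iff_right₀ hNR).mpr (Int.fract_lt_one u)
        _ = N := mul_one _)
  obtain ⟨p, -, q, -, hpq, hfeq⟩ :=
    Finset.exists_ne_map_eq_of_card_lt_of_maps_to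
      (s := (Finset.univ : Finset (Fin (N + 1) × Fin (N + 1))))
      (t := Finset.Ico (0 : ℤ) (N : ℤ) ×ˢ Finset.Ico (0 : ℤ) (N : ℤ))
      (f := f)
      (by
        rw [Finset.card_univ, Fintype.card_prod, Fintype.card_fin, Finset.card_product,
          Int.card_Ico]
        simp only [sub_zero, Int.toNat_natCast]
        nlinarith [hNpos])
      (fun r _ => by
        rw [hf]
        exact Finset.mem_product.mpr ⟨hmem (s r), hmem (t r)⟩)
  have hfeq1 : ⌊(N : ℝ) * Int.fract (s p)⌋ = ⌊(N : ℝ) * Int.fract (s q)⌋ := by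
    have h := congrArg Prod.fst hfeq
    rw [hf] at h
    exact h
  have hfeq2 : ⌊(N : ℝ) * Int.fract (t p)⌋ = ⌊(N : ℝ) * Int.fract (t q)⌋ := by
    have h := congrArg Prod.snd hfeq
    rw [hf] at h
    exact h
  clear_value a b t s f
  -- the approximating pair
  set Δi : ℤ := (p.1 : ℤ) - (q.1 : ℤ) with hΔi
  set Δj : ℤ := (p.2 : ℤ) - (q.2 : ℤ) with hΔj
  set m : ℤ := ⌊s q⌋ - ⌊s p⌋ with hm
  set n : ℤ := ⌊t q⌋ - ⌊t p⌋ with hn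
  set c : 𝓞 F := (Δi : 𝓞 F) + (Δj : 𝓞 F) * θ with hc
  set d : 𝓞 F := (m : 𝓞 F) + (n : 𝓞 F) * θ with hd
  -- values of the embeddings
  have hc0v : v₀ (c : F) = (Δi : ℝ) + (Δj : ℝ) * V₀ := by
    rw [hc]; push_cast; simp [map_add, map_mul, map_intCast, hV₀]
  have hc1v : v₁ (c : F) = (Δi : ℝ) + (Δj : ℝ) * V₁ := by
    rw [hc]; push_cast; simp [map_add, map_mul, map_intCast, hV₁]
  have hd0v : v₀ (d : F) = (m : ℝ) + (n : ℝ) * V₀ := by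
    rw [hd]; push_cast; simp [map_add, map_mul, map_intCast, hV₀]
  have hd1v : v₁ (d : F) = (m : ℝ) + (n : ℝ) * V₁ := by
    rw [hd]; push_cast; simp [map_add, map_mul, map_intCast, hV₁]
  -- fractional part differences are at most 1/N
  have hfr : ∀ u v : ℝ, ⌊(N : ℝ) * Int.fract u⌋ = ⌊(N : ℝ) * Int.fract v⌋ →
      |Int.fract u - Int.fract v| ≤ 1 / (N : ℝ) := by
    intro u v huv
    have h1 : |(N : ℝ) * Int.fract u - (N : ℝ) * Int.fract v| < 1 :=
      Int.abs_sub_lt_one_of_floor_eq_floor huv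
    rw [← mul_sub, abs_mul, abs_of_pos hNR] at h1
    rw [le_div_iff₀ hNR]
    nlinarith [abs_nonneg (Int.fract u - Int.fract v)]
  have hfs := hfr _ _ hfeq1
  have hft := hfr _ _ hfeq2
  have hbig : 1 + Θ ≤ (N : ℝ) * δ := by
    rw [div_le_iff₀ hδ] at hNge
    linarith
  -- bounds on the index differences
  have hΔiB : |(Δi : ℝ)| ≤ (N : ℝ) := by
    rw [hΔi]
    push_cast
    have h1 : (p.1 : ℝ) ≤ (N : ℝ) := by exact_mod_cast Nat.lt_succ_iff.mp p.1.isLt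
    have h2 : (q.1 : ℝ) ≤ (N : ℝ) := by exact_mod_cast Nat.lt_succ_iff.mp q.1.isLt
    have h3 : (0 : ℝ) ≤ ((p.1 : ℕ) : ℝ) := by positivity
    have h4 : (0 : ℝ) ≤ ((q.1 : ℕ) : ℝ) := by positivity
    rw [abs_sub_le_iff]
    constructor <;> linarith
  have hΔjB : |(Δj : ℝ)| ≤ (N : ℝ) := by
    rw [hΔj]
    push_cast
    have h1 : (p.2 : ℝ) ≤ (N : ℝ) := by exact_mod_cast Nat.lt_succ_iff.mp p.2.isLt
    have h2 : (q.2 : ℝ) ≤ (N : ℝ) := by exact_mod_cast Nat.lt_succ_iff.mp q.2.isLt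
    have h3 : (0 : ℝ) ≤ ((p.2 : ℕ) : ℝ) := by positivity
    have h4 : (0 : ℝ) ≤ ((q.2 : ℕ) : ℝ) := by positivity
    rw [abs_sub_le_iff]
    constructor <;> linarith
  -- c is nonzero
  have hcne : c ≠ 0 := by
    intro hc0
    have h0 : (c : F) = 0 := by rw [hc0]; simp
    have e0 : (Δi : ℝ) + (Δj : ℝ) * V₀ = 0 := by
      rw [← hc0v, h0, map_zero]
    have e1 : (Δi : ℝ) + (Δj : ℝ) * V₁ = 0 := by
      rw [← hc1v, h0, map_zero]
    have hΔj0 : Δj = 0 := by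
      by_contra hΔj0
      have h5 : (Δj : ℝ) * (V₀ - V₁) = 0 := by linarith
      rcases mul_eq_zero.mp h5 with h | h
      · exact hΔj0 (by exact_mod_cast h)
      · exact hD h
    have hΔi0 : Δi = 0 := by
      rw [hΔj0] at e0
      push_cast at e0
      exact_mod_cast (by linarith : (Δi : ℝ) = 0)
    apply hpq
    have h1 : p.1 = q.1 := by
      have := sub_eq_zero.mp hΔi0
      ext
      exact_mod_cast this
    have h2 : p.2 = q.2 := by
      have := sub_eq_zero.mp hΔj0
      ext
      exact_mod_cast this
    exact Prod.ext h1 h2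
  refine ⟨c, d, hcne, ?_, ?_⟩
  · -- the approximation bound
    have key0 : v₀ (c : F) * x.1 + v₀ (d : F)
        = (Int.fract (s p) - Int.fract (s q)) + (Int.fract (t p) - Int.fract (t q)) * V₀ := by
      rw [hc0v, hd0v]
      have e1 := hrec0 p
      have e2 := hrec0 q
      have hap : ((Δi : ℝ) + (Δj : ℝ) * V₀) * x.1 = a p - a q := by
        rw [ha, hΔi, hΔj]; push_cast; ring
      rw [hap, hm, hn, Int.fract, Int.fract, Int.fract, Int.fract]
      push_cast
      linear_combination e2 - e1
    have key1 : v₁ (c : F) * x.2 + v₁ (d : F)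
        = (Int.fract (s p) - Int.fract (s q)) + (Int.fract (t p) - Int.fract (t q)) * V₁ := by
      rw [hc1v, hd1v]
      have e1 := hrec1 p
      have e2 := hrec1 q
      have hap : ((Δi : ℝ) + (Δj : ℝ) * V₁) * x.2 = b p - b q := by
        rw [hb, hΔi, hΔj]; push_cast; ring
      rw [hap, hm, hn, Int.fract, Int.fract, Int.fract, Int.fract]
      push_cast
      linear_combination e2 - e1
    have bound : ∀ V : ℝ, |V| ≤ Θ →
        |(Int.fract (s p) - Int.fract (s q)) + (Int.fract (t p) - Int.fract (t q)) * V| ≤ δ := by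
      intro V hV
      calc |(Int.fract (s p) - Int.fract (s q)) + (Int.fract (t p) - Int.fract (t q)) * V|
          ≤ |Int.fract (s p) - Int.fract (s q)| + |Int.fract (t p) - Int.fract (t q)| * |V| := by
            refine le_trans (abs_add_le _ _) ?_
            rw [abs_mul]
        _ ≤ 1 / (N : ℝ) + (1 / (N : ℝ)) * Θ :=
            add_le_add hfs
              (mul_le_mul hft hV (abs_nonneg V) (by positivity))
        _ = (1 + Θ) / (N : ℝ) := by ring
        _ ≤ δ := by
            rw [div_le_iff₀ hNR]
            linarith [hbig, mul_comm δ (N : ℝ)]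
    rw [key0, key1]
    exact max_le (bound _ hV₀Θ) (bound _ hV₁Θ)
  · -- the size bound
    have hNsmall : (N : ℝ) ≤ 2 * (1 + Θ) / δ := by
      have h1 : (N : ℝ) ≤ (1 + Θ) / δ + 1 := by
        have h0 := Nat.ceil_lt_add_one (by positivity : (0:ℝ) ≤ (1 + Θ) / δ)
        rw [hNdef]
        push_cast
        linarith [h0]
      have h2 : (1 : ℝ) ≤ (1 + Θ) / δ := by
        rw [le_div_iff₀ hδ]
        nlinarith
      calc (N : ℝ) ≤ (1 + Θ) / δ + 1 := h1
        _ ≤ (1 + Θ) / δ + (1 + Θ) / δ := by linarith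
        _ = 2 * (1 + Θ) / δ := by ring
    have bound : ∀ V : ℝ, |V| ≤ Θ →
        |(Δi : ℝ) + (Δj : ℝ) * V| ≤ 2 * (1 + Θ) ^ 2 / δ := by
      intro V hV
      calc |(Δi : ℝ) + (Δj : ℝ) * V| ≤ |(Δi : ℝ)| + |(Δj : ℝ)| * |V| := by
            refine le_trans (abs_add_le _ _) ?_
            rw [abs_mul]
        _ ≤ (N : ℝ) + (N : ℝ) * Θ :=
            add_le_add hΔiB (mul_le_mul hΔjB hV (abs_nonneg V) hNR.le)
        _ = (N : ℝ) * (1 + Θ) := by ring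
        _ ≤ (2 * (1 + Θ) / δ) * (1 + Θ) :=
            mul_le_mul_of_nonneg_right hNsmall (by positivity)
        _ = 2 * (1 + Θ) ^ 2 / δ := by ring
    rw [hc0v, hc1v]
    exact max_le (bound _ hV₀Θ) (bound _ hV₁Θ)
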